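/- Let n be a positive integer, α > n/4, θ ∈ ℝ, and C_V, C_p ≥ 0. There exists a constant C > 0, depending only on n and α, such that the following holds. Let v, p, q : ℤ^n → ℂ with ‖v‖_{X_α} ≤ C_V and ‖p‖_{X_α}, ‖q‖_{X_α} ≤ C_p, suppose the function V_p(y) = Σ_k v_k e^{ik·y} is real-valued, and set φ_p(y) = Σ_k p_k e^{ik·y}, ψ_p(y) = Σ_k q_k e^{ik·y}. Then for every t ≥ 0, ‖e^{−it(V_p + θ|φ_p|²)} φ_p − e^{−it(V_p + θ|ψ_p|²)} ψ_p‖ ≤ e^{C (C_V + |θ| C_p²) t} ‖φ_p − ψ_p‖. -/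

import Mathlib

open MeasureTheory
open scoped Real

/-- The `X_α`-norm of a family of Fourier coefficients. -/
noncomputable def XalphaNorm (n : ℕ) (α : ℝ) (c : (Fin n → ℤ) → ℂ) : ℝ :=
  Real.sqrt (∑' k : Fin n → ℤ,
    (1 + Real.sqrt (∑ j, ((k j : ℝ)) ^ 2) ^ (4 * α)) * ‖c k‖ ^ 2)

/-- The Fourier series with coefficients `c`. -/
noncomputable def fourierSeries (n : ℕ) (c : (Fin n → ℤ) → ℂ) (y : Fin n → ℝ) : ℂ :=
  ∑' k : Fin n → ℤ, c k * Complex.exp (Complex.I * ((∑ j, (k j : ℝ) * y j : ℝ) : ℂ))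

/-- The normalized `L²` norm of a `2π`-periodic function over one period cell. -/
noncomputable def L2NormPeriodic (n : ℕ) (f : (Fin n → ℝ) → ℂ) : ℝ :=
  Real.sqrt ((((2 * π) ^ n)⁻¹ : ℝ) *
    ∫ y in Set.Icc (0 : Fin n → ℝ) (fun _ => 2 * π), ‖f y‖ ^ 2)



lemma amgm_aux {ε w x : ℝ} (hε : 0 < ε) (hw : 0 < w) (hx : 0 ≤ x) :
    x ≤ (ε * w⁻¹ + ε⁻¹ * (w * x ^ 2)) / 2 := by
  have h1 : 0 < ε * w⁻¹ := by positivity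
  have h2 : (ε * w⁻¹) * (ε⁻¹ * w) = 1 := by field_simp
  nlinarith [sq_nonneg (ε * w⁻¹ - x), mul_pos hε (inv_pos.mpr hw), sq_nonneg x,
    mul_pos (inv_pos.mpr hε) hw]

lemma summable_int_pot {s : ℝ} (hs : 1 < s) :
    Summable (fun m : ℤ => (1 + |(m : ℝ)|) ^ (-s)) := by
  have h0 : Summable (fun m : ℤ => |(m : ℝ)| ^ (-s) + (if m = 0 then (1:ℝ) else 0)) := by
    refine (Real.summable_abs_int_rpow hs).add ?_
    apply summable_of_ne_finset_zero (s := ({0} : Finset ℤ))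
    intro m hm
    simp only [Finset.mem_singleton] at hm
    simp [hm]
  refine h0.of_nonneg_of_le (fun m => by positivity) (fun m => ?_)
  rcases eq_or_ne m 0 with rfl | hm
  · simp [Real.zero_rpow (show (-s) ≠ 0 from by intro h; nlinarith)]
  · have h1 : (1:ℝ) ≤ |(m:ℝ)| := by
      rw [← Int.cast_abs]; exact_mod_cast Int.one_le_abs hm
    have h2 := Real.rpow_le_rpow_of_nonpos (by linarith) (by linarith : |(m:ℝ)| ≤ 1 + |(m:ℝ)|)
      (neg_nonpos.mpr (by linarith : (0:ℝ) ≤ s))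
    calc (1 + |(m:ℝ)|) ^ (-s) ≤ |(m:ℝ)| ^ (-s) := h2
      _ ≤ _ := by simp [hm]
lemma summable_prod_pot (n : ℕ) {s : ℝ} (hs : 1 < s) :
    Summable (fun k : Fin n → ℤ => ∏ j, (1 + |((k j : ℝ))|) ^ (-s)) := by
  induction n with
  | zero => exact (hasSum_fintype _).summable
  | succ n ih =>
    have hF : ∀ m : ℤ, (0:ℝ) ≤ (1 + |((m : ℝ))|) ^ (-s) :=
      fun m => Real.rpow_nonneg (by positivity) _
    have key : Summable (fun x : ℤ × (Fin n → ℤ) =>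
        (1 + |((x.1 : ℝ))|) ^ (-s) * ∏ j, (1 + |((x.2 j : ℝ))|) ^ (-s)) :=
      Summable.mul_of_nonneg (f := fun m : ℤ => (1 + |((m : ℝ))|) ^ (-s))
        (g := fun k : Fin n → ℤ => ∏ j, (1 + |((k j : ℝ))|) ^ (-s))
        (summable_int_pot hs) ih (fun m => hF m)
        (fun k => Finset.prod_nonneg fun j _ => hF _)
    rw [← (Fin.consEquiv (fun _ : Fin (n+1) => ℤ)).summable_iff]
    refine key.congr fun x => ?_
    simp [Fin.prod_univ_succ, Fin.consEquiv]
lemma weight_bound (n : ℕ) (hn : 0 < n) {s : ℝ} (hs : (n : ℝ) < s) (k : Fin n → ℤ) :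
    (1 + Real.sqrt (∑ j, ((k j : ℝ)) ^ 2) ^ s)⁻¹ ≤
      2 ^ s * ∏ j, (1 + |((k j : ℝ))|) ^ (-(s / n)) := by
  set r : ℝ := Real.sqrt (∑ j, ((k j : ℝ)) ^ 2) with hr
  have hr0 : 0 ≤ r := Real.sqrt_nonneg _
  have hs0 : 0 < s := lt_of_le_of_lt (by positivity) hs
  have hkr : ∀ j, |((k j : ℝ))| ≤ r := by
    intro j
    rw [← Real.sqrt_sq_eq_abs]
    exact Real.sqrt_le_sqrt (Finset.single_le_sum (f := fun j => ((k j : ℝ))^2)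
      (fun j _ => by positivity) (Finset.mem_univ j))
  have hP : ∏ j, (1 + |((k j : ℝ))|) ≤ (1 + r) ^ (n : ℕ) := by
    calc ∏ j, (1 + |((k j : ℝ))|) ≤ ∏ _j : Fin n, (1 + r) :=
          Finset.prod_le_prod (fun j _ => by positivity) (fun j _ => by linarith [hkr j])
      _ = (1 + r) ^ (n : ℕ) := by simp [Finset.prod_const]
  -- (∏ (1+|k j|)) ^ (s/n) ≤ (1+r)^s
  have hprodpos : (0:ℝ) < ∏ j, (1 + |((k j : ℝ))|) :=
    Finset.prod_pos fun j _ => by positivity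
  have hsn : (0:ℝ) < s / n := by positivity
  have h1 : (∏ j, (1 + |((k j : ℝ))|)) ^ (s / n) ≤ (1 + r) ^ s := by
    calc (∏ j, (1 + |((k j : ℝ))|)) ^ (s / n)
        ≤ ((1 + r) ^ (n:ℕ)) ^ (s / n) :=
          Real.rpow_le_rpow hprodpos.le hP hsn.le
      _ = (1 + r) ^ s := by
          rw [← Real.rpow_natCast (1 + r) n, ← Real.rpow_mul (by positivity)]
          congr 1
          field_simp
  have h2 : (1 + r) ^ s ≤ 2 ^ s * (1 + r ^ s) := by
    rcases le_total r 1 with h | h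
    · calc (1 + r) ^ s ≤ 2 ^ s := Real.rpow_le_rpow (by positivity) (by linarith) hs0.le
        _ ≤ 2 ^ s * (1 + r ^ s) := le_mul_of_one_le_right (by positivity)
            (by nlinarith [Real.rpow_nonneg hr0 s])
    · calc (1 + r) ^ s ≤ (2 * r) ^ s := Real.rpow_le_rpow (by positivity) (by linarith) hs0.le
        _ = 2 ^ s * r ^ s := Real.mul_rpow (by norm_num) hr0
        _ ≤ 2 ^ s * (1 + r ^ s) := by
            have : (0:ℝ) < 2 ^ s := by positivity
            nlinarith
  -- combine
  have h3 : (∏ j, (1 + |((k j : ℝ))|)) ^ (s / n) ≤ 2 ^ s * (1 + r ^ s) := h1.trans h2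
  have hppos : (0:ℝ) < (∏ j, (1 + |((k j : ℝ))|)) ^ (s / n) := Real.rpow_pos_of_pos hprodpos _
  have hrpos : (0:ℝ) < 1 + r ^ s := by positivity
  set P : ℝ := (∏ j, (1 + |((k j : ℝ))|)) ^ (s / n) with hPdef
  have h4 : (1 + r ^ s)⁻¹ ≤ 2 ^ s / P := by
    rw [inv_eq_one_div, div_le_div_iff₀ hrpos hppos, one_mul]
    exact h3
  calc (1 + r ^ s)⁻¹ ≤ 2 ^ s / P := h4
    _ = 2 ^ s * P⁻¹ := div_eq_mul_inv _ _
    _ = 2 ^ s * ∏ j, (1 + |((k j : ℝ))|) ^ (-(s / n)) := by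
        rw [hPdef, ← Real.rpow_neg hprodpos.le,
          ← Real.finset_prod_rpow _ _ (fun j _ => by positivity)]
lemma summable_weight (n : ℕ) (hn : 0 < n) {α : ℝ} (hα : (n : ℝ) / 4 < α) :
    Summable (fun k : Fin n → ℤ =>
      (1 + Real.sqrt (∑ j, ((k j : ℝ)) ^ 2) ^ (4 * α))⁻¹) := by
  have hs : (n : ℝ) < 4 * α := by linarith
  have hsn : 1 < 4 * α / n := by
    rw [lt_div_iff₀ (by exact_mod_cast hn)]; linarith
  refine ((summable_prod_pot n hsn).mul_left ((2:ℝ) ^ (4*α))).of_nonneg_of_le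
    (fun k => by positivity) (fun k => weight_bound n hn hs k)

lemma one_le_tsum_weight (n : ℕ) (hn : 0 < n) {α : ℝ} (hα : (n : ℝ) / 4 < α) :
    1 ≤ ∑' k : Fin n → ℤ, (1 + Real.sqrt (∑ j, ((k j : ℝ)) ^ 2) ^ (4 * α))⁻¹ := by
  have h0 : (1 + Real.sqrt (∑ j, (((0 : Fin n → ℤ) j : ℝ)) ^ 2) ^ (4 * α))⁻¹ = 1 := by
    have hα0 : 0 < α := lt_of_le_of_lt (by positivity) hα
    have : (4 : ℝ) * α ≠ 0 := by nlinarith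
    simp [Real.zero_rpow this]
  calc (1:ℝ) = (1 + Real.sqrt (∑ j, (((0 : Fin n → ℤ) j : ℝ)) ^ 2) ^ (4 * α))⁻¹ := h0.symm
    _ ≤ _ := Summable.le_tsum (summable_weight n hn hα) 0 (fun k _ => by positivity)

lemma exp_I_sub_one_le (x : ℝ) : ‖Complex.exp ((x : ℂ) * Complex.I) - 1‖ ≤ |x| := by
  have hre : (Complex.exp ((x : ℂ) * Complex.I) - 1).re = Real.cos x - 1 := by
    simp [Complex.exp_ofReal_mul_I_re]
  have him : (Complex.exp ((x : ℂ) * Complex.I) - 1).im = Real.sin x := by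
    simp [Complex.exp_ofReal_mul_I_im]
  rw [Complex.norm_def, Complex.normSq_apply, hre, him,
    ← Real.sqrt_sq_eq_abs]
  apply Real.sqrt_le_sqrt
  have h1 := Real.one_sub_sq_div_two_le_cos (x := x)
  have h2 := Real.sin_sq_add_cos_sq x
  nlinarith
noncomputable def Sw (n : ℕ) (α : ℝ) : ℝ :=
  ∑' k : Fin n → ℤ, (1 + Real.sqrt (∑ j, ((k j : ℝ)) ^ 2) ^ (4 * α))⁻¹

lemma weight_pos (n : ℕ) (α : ℝ) (k : Fin n → ℤ) :
    (0:ℝ) < 1 + Real.sqrt (∑ j, ((k j : ℝ)) ^ 2) ^ (4 * α) := by positivity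

lemma summable_norm_coeff (n : ℕ) (hn : 0 < n) {α : ℝ} (hα : (n : ℝ) / 4 < α)
    (c : (Fin n → ℤ) → ℂ)
    (hc : Summable (fun k : Fin n → ℤ =>
      (1 + Real.sqrt (∑ j, ((k j : ℝ)) ^ 2) ^ (4 * α)) * ‖c k‖ ^ 2)) :
    Summable (fun k => ‖c k‖) := by
  refine (((summable_weight n hn hα).add hc).div_const 2).of_nonneg_of_le
    (fun k => norm_nonneg _) (fun k => ?_)
  have h := amgm_aux (ε := 1) (w := 1 + Real.sqrt (∑ j, ((k j : ℝ)) ^ 2) ^ (4 * α))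
    (x := ‖c k‖) one_pos (weight_pos n α k) (norm_nonneg _)
  simpa using h

lemma tsum_norm_coeff_le (n : ℕ) (hn : 0 < n) {α : ℝ} (hα : (n : ℝ) / 4 < α)
    (c : (Fin n → ℤ) → ℂ)
    (hc : Summable (fun k : Fin n → ℤ =>
      (1 + Real.sqrt (∑ j, ((k j : ℝ)) ^ 2) ^ (4 * α)) * ‖c k‖ ^ 2))
    {C_p : ℝ} (hCp : 0 ≤ C_p) (hX : XalphaNorm n α c ≤ C_p) :
    ∑' k, ‖c k‖ ≤ Real.sqrt (Sw n α) * C_p := by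
  set w : (Fin n → ℤ) → ℝ :=
    fun k => 1 + Real.sqrt (∑ j, ((k j : ℝ)) ^ 2) ^ (4 * α) with hw
  have hwpos : ∀ k, 0 < w k := weight_pos n α
  have hT0 : 0 ≤ ∑' k, w k * ‖c k‖ ^ 2 := tsum_nonneg fun k => by positivity
  have hN2 : (XalphaNorm n α c) ^ 2 = ∑' k, w k * ‖c k‖ ^ 2 := Real.sq_sqrt hT0
  have hS1 : (1:ℝ) ≤ Sw n α := one_le_tsum_weight n hn hα
  have hSpos : 0 < Real.sqrt (Sw n α) := Real.sqrt_pos.mpr (by linarith)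
  rcases eq_or_lt_of_le hCp with hC0 | hC0
  · -- C_p = 0, so all coefficients vanish
    have hX0 : XalphaNorm n α c = 0 :=
      le_antisymm (hX.trans hC0.symm.le) (Real.sqrt_nonneg _)
    have hT : ∑' k, w k * ‖c k‖ ^ 2 = 0 := by
      rw [← hN2, hX0]; ring
    have hck : ∀ k, ‖c k‖ = 0 := by
      intro k
      have h1 : w k * ‖c k‖ ^ 2 ≤ 0 := hT ▸ Summable.le_tsum hc k (fun j _ => by positivity)
      have h2 : 0 ≤ w k * ‖c k‖ ^ 2 := by positivity
      have h3 : w k * ‖c k‖ ^ 2 = 0 := le_antisymm h1 h2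
      rcases mul_eq_zero.mp h3 with h | h
      · exact absurd h (ne_of_gt (hwpos k))
      · exact pow_eq_zero_iff (n := 2) (by norm_num) |>.mp h
    have hz : ∑' k, ‖c k‖ = 0 := by
      rw [tsum_congr hck, tsum_zero]
    rw [hz, ← hC0, mul_zero]
  · -- C_p > 0
    set ε : ℝ := C_p / Real.sqrt (Sw n α) with hε
    have hεpos : 0 < ε := div_pos hC0 hSpos
    have hub : ∀ k, ‖c k‖ ≤ (ε * (w k)⁻¹ + ε⁻¹ * (w k * ‖c k‖ ^ 2)) / 2 :=
      fun k => amgm_aux hεpos (hwpos k) (norm_nonneg _)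
    have hsum1 : Summable (fun k => (w k)⁻¹) := summable_weight n hn hα
    have hsum : Summable (fun k => (ε * (w k)⁻¹ + ε⁻¹ * (w k * ‖c k‖ ^ 2)) / 2) :=
      ((hsum1.mul_left ε).add (hc.mul_left ε⁻¹)).div_const 2
    have h1 : ∑' k, ‖c k‖ ≤ ∑' k, (ε * (w k)⁻¹ + ε⁻¹ * (w k * ‖c k‖ ^ 2)) / 2 :=
      Summable.tsum_le_tsum hub (summable_norm_coeff n hn hα c hc) hsum
    have h2 : ∑' k, (ε * (w k)⁻¹ + ε⁻¹ * (w k * ‖c k‖ ^ 2)) / 2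
        = (ε * Sw n α + ε⁻¹ * (XalphaNorm n α c) ^ 2) / 2 := by
      rw [tsum_div_const, Summable.tsum_add (hsum1.mul_left ε) (hc.mul_left ε⁻¹),
        tsum_mul_left, tsum_mul_left, hN2]
      rfl
    have hNle : (XalphaNorm n α c) ^ 2 ≤ C_p ^ 2 := by
      have hN0 : 0 ≤ XalphaNorm n α c := Real.sqrt_nonneg _
      nlinarith [hX, hN0]
    have hSS : Real.sqrt (Sw n α) * Real.sqrt (Sw n α) = Sw n α :=
      Real.mul_self_sqrt (by linarith)
    have h3 : (ε * Sw n α + ε⁻¹ * (XalphaNorm n α c) ^ 2) / 2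
        ≤ Real.sqrt (Sw n α) * C_p := by
      have hεS : ε * Sw n α = Real.sqrt (Sw n α) * C_p := by
        rw [hε]; field_simp; nlinarith [hSS]
      have hεinv : ε⁻¹ * C_p ^ 2 = Real.sqrt (Sw n α) * C_p := by
        rw [hε]; field_simp
      have : ε⁻¹ * (XalphaNorm n α c) ^ 2 ≤ ε⁻¹ * C_p ^ 2 :=
        mul_le_mul_of_nonneg_left hNle (by positivity)
      linarith
    calc ∑' k, ‖c k‖ ≤ _ := h1
      _ = _ := h2
      _ ≤ _ := h3
lemma norm_fourier_term (n : ℕ) (c : (Fin n → ℤ) → ℂ) (k : Fin n → ℤ) (y : Fin n → ℝ) :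
    ‖c k * Complex.exp (Complex.I * ((∑ j, (k j : ℝ) * y j : ℝ) : ℂ))‖ = ‖c k‖ := by
  rw [norm_mul, Complex.norm_exp]
  simp

lemma norm_fourierSeries_le (n : ℕ) (c : (Fin n → ℤ) → ℂ)
    (hc : Summable (fun k => ‖c k‖)) (y : Fin n → ℝ) :
    ‖fourierSeries n c y‖ ≤ ∑' k, ‖c k‖ := by
  rw [fourierSeries]
  refine le_trans (norm_tsum_le_tsum_norm ?_) ?_
  · exact hc.congr fun k => (norm_fourier_term n c k y).symm
  · exact le_of_eq (tsum_congr fun k => norm_fourier_term n c k y)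

lemma continuous_fourierSeries (n : ℕ) (c : (Fin n → ℤ) → ℂ)
    (hc : Summable (fun k => ‖c k‖)) :
    Continuous (fourierSeries n c) := by
  apply continuous_tsum (u := fun k => ‖c k‖) _ hc
  · intro k y
    exact le_of_eq (norm_fourier_term n c k y)
  · intro k
    apply Continuous.mul continuous_const
    apply Complex.continuous_exp.comp
    apply Continuous.mul continuous_const
    exact Complex.continuous_ofReal.comp (continuous_finset_sum _
      (fun j _ => continuous_const.mul (continuous_apply j)))
lemma pointwise_est (t θ : ℝ) (ht : 0 ≤ t) (V : ℝ) (a b : ℂ) :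
    ‖Complex.exp (-Complex.I * (t : ℂ) * ((V : ℂ) + (θ : ℂ) * ((‖a‖ : ℝ) : ℂ) ^ 2)) * a -
      Complex.exp (-Complex.I * (t : ℂ) * ((V : ℂ) + (θ : ℂ) * ((‖b‖ : ℝ) : ℂ) ^ 2)) * b‖
    ≤ (1 + t * |θ| * ((‖a‖ + ‖b‖) * ‖a‖)) * ‖a - b‖ := by
  set x : ℝ := -(t * θ * (‖a‖ ^ 2 - ‖b‖ ^ 2)) with hx
  set E2 : ℂ := Complex.exp (-Complex.I * (t : ℂ) * ((V : ℂ) + (θ : ℂ) * ((‖b‖ : ℝ) : ℂ) ^ 2))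
    with hE2
  have hsplit : Complex.exp (-Complex.I * (t : ℂ) * ((V : ℂ) + (θ : ℂ) * ((‖a‖ : ℝ) : ℂ) ^ 2))
      = E2 * Complex.exp ((x : ℂ) * Complex.I) := by
    rw [hE2, ← Complex.exp_add]
    congr 1
    rw [hx]
    push_cast
    ring
  have hE2norm : ‖E2‖ = 1 := by
    have harg : -Complex.I * (t : ℂ) * ((V : ℂ) + (θ : ℂ) * ((‖b‖ : ℝ) : ℂ) ^ 2)
        = ((-(t * (V + θ * ‖b‖ ^ 2)) : ℝ) : ℂ) * Complex.I := by
      push_cast; ring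
    rw [hE2, harg, Complex.norm_exp_ofReal_mul_I]
  have hid : Complex.exp (-Complex.I * (t : ℂ) * ((V : ℂ) + (θ : ℂ) * ((‖a‖ : ℝ) : ℂ) ^ 2)) * a -
      E2 * b = E2 * (a - b) + E2 * (Complex.exp ((x : ℂ) * Complex.I) - 1) * a := by
    rw [hsplit]; ring
  rw [hid]
  calc ‖E2 * (a - b) + E2 * (Complex.exp ((x : ℂ) * Complex.I) - 1) * a‖
      ≤ ‖E2 * (a - b)‖ + ‖E2 * (Complex.exp ((x : ℂ) * Complex.I) - 1) * a‖ := norm_add_le _ _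
    _ = ‖a - b‖ + ‖Complex.exp ((x : ℂ) * Complex.I) - 1‖ * ‖a‖ := by
        rw [norm_mul, norm_mul, norm_mul, hE2norm, one_mul, one_mul]
    _ ≤ ‖a - b‖ + (|x| * ‖a‖) := by
        have := exp_I_sub_one_le x
        have ha : (0:ℝ) ≤ ‖a‖ := norm_nonneg a
        nlinarith [norm_nonneg (Complex.exp ((x : ℂ) * Complex.I) - 1)]
    _ ≤ (1 + t * |θ| * ((‖a‖ + ‖b‖) * ‖a‖)) * ‖a - b‖ := by
        have hxle : |x| ≤ t * |θ| * ((‖a‖ + ‖b‖) * ‖a - b‖) := by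
          rw [hx, abs_neg, abs_mul, abs_mul, abs_of_nonneg ht]
          have h1 : |‖a‖ ^ 2 - ‖b‖ ^ 2| = |‖a‖ - ‖b‖| * (‖a‖ + ‖b‖) := by
            rw [← abs_of_nonneg (by positivity : (0:ℝ) ≤ ‖a‖ + ‖b‖), ← abs_mul]
            congr 1; ring
          rw [h1]
          have h2 : |‖a‖ - ‖b‖| ≤ ‖a - b‖ := abs_norm_sub_norm_le a b
          have h3 : (0:ℝ) ≤ ‖a‖ + ‖b‖ := by positivity
          nlinarith [abs_nonneg θ, mul_nonneg (mul_nonneg ht (abs_nonneg θ)) h3]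
        have ha : (0:ℝ) ≤ ‖a‖ := norm_nonneg a
        nlinarith [norm_nonneg (a - b), abs_nonneg x,
          mul_le_mul_of_nonneg_right hxle ha]

lemma L2_mono (n : ℕ) (f g : (Fin n → ℝ) → ℂ) (hf : Continuous f) (hg : Continuous g)
    {K : ℝ} (hK : 0 ≤ K) (h : ∀ y, ‖f y‖ ≤ K * ‖g y‖) :
    L2NormPeriodic n f ≤ K * L2NormPeriodic n g := by
  have hfint : MeasureTheory.IntegrableOn (fun y => ‖f y‖ ^ 2)
      (Set.Icc (0 : Fin n → ℝ) (fun _ => 2 * π)) :=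
    ((hf.norm.pow 2)).integrableOn_Icc
  have hgint : MeasureTheory.IntegrableOn (fun y => K ^ 2 * ‖g y‖ ^ 2)
      (Set.Icc (0 : Fin n → ℝ) (fun _ => 2 * π)) :=
    (continuous_const.mul (hg.norm.pow 2)).integrableOn_Icc
  have hle : ∫ y in Set.Icc (0 : Fin n → ℝ) (fun _ => 2 * π), ‖f y‖ ^ 2
      ≤ ∫ y in Set.Icc (0 : Fin n → ℝ) (fun _ => 2 * π), K ^ 2 * ‖g y‖ ^ 2 := by
    refine MeasureTheory.setIntegral_mono_on hfint hgint measurableSet_Icc (fun y _ => ?_)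
    have := pow_le_pow_left₀ (norm_nonneg (f y)) (h y) 2
    calc ‖f y‖ ^ 2 ≤ (K * ‖g y‖) ^ 2 := this
      _ = K ^ 2 * ‖g y‖ ^ 2 := by ring
  have hc : (0:ℝ) ≤ (((2 * π) ^ n)⁻¹ : ℝ) := by positivity
  rw [L2NormPeriodic, L2NormPeriodic]
  have step : (((2 * π) ^ n)⁻¹ : ℝ) *
      ∫ y in Set.Icc (0 : Fin n → ℝ) (fun _ => 2 * π), ‖f y‖ ^ 2
      ≤ K ^ 2 * ((((2 * π) ^ n)⁻¹ : ℝ) *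
        ∫ y in Set.Icc (0 : Fin n → ℝ) (fun _ => 2 * π), ‖g y‖ ^ 2) := by
    have : ∫ y in Set.Icc (0 : Fin n → ℝ) (fun _ => 2 * π), K ^ 2 * ‖g y‖ ^ 2
        = K ^ 2 * ∫ y in Set.Icc (0 : Fin n → ℝ) (fun _ => 2 * π), ‖g y‖ ^ 2 :=
      MeasureTheory.integral_const_mul _ _
    calc _ ≤ (((2 * π) ^ n)⁻¹ : ℝ) *
          ∫ y in Set.Icc (0 : Fin n → ℝ) (fun _ => 2 * π), K ^ 2 * ‖g y‖ ^ 2 :=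
            mul_le_mul_of_nonneg_left hle hc
      _ = _ := by rw [this]; ring
  calc Real.sqrt _ ≤ Real.sqrt (K ^ 2 * ((((2 * π) ^ n)⁻¹ : ℝ) *
        ∫ y in Set.Icc (0 : Fin n → ℝ) (fun _ => 2 * π), ‖g y‖ ^ 2)) :=
        Real.sqrt_le_sqrt step
    _ = K * Real.sqrt ((((2 * π) ^ n)⁻¹ : ℝ) *
        ∫ y in Set.Icc (0 : Fin n → ℝ) (fun _ => 2 * π), ‖g y‖ ^ 2) := by
        rw [Real.sqrt_mul (by positivity), Real.sqrt_sq hK]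

/-- Lipschitz stability of the nonlinear phase flow of the potential
subproblem: with `‖v‖_{X_α} ≤ C_V` and `‖p‖_{X_α}, ‖q‖_{X_α} ≤ C_p`,
`‖e^{-it(V_p+θ|φ_p|²)}φ_p − e^{-it(V_p+θ|ψ_p|²)}ψ_p‖
  ≤ e^{C(C_V + |θ|C_p²)t} ‖φ_p − ψ_p‖`. -/
theorem phase_flow_stability
    (n : ℕ) (hn : 0 < n) (α : ℝ) (hα : (n : ℝ) / 4 < α) (θ C_V C_p : ℝ)
    (hCV : 0 ≤ C_V) (hCp : 0 ≤ C_p) :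
    ∃ C : ℝ, 0 < C ∧
      ∀ v p q : (Fin n → ℤ) → ℂ,
        Summable (fun k : Fin n → ℤ =>
          (1 + Real.sqrt (∑ j, ((k j : ℝ)) ^ 2) ^ (4 * α)) * ‖v k‖ ^ 2) →
        Summable (fun k : Fin n → ℤ =>
          (1 + Real.sqrt (∑ j, ((k j : ℝ)) ^ 2) ^ (4 * α)) * ‖p k‖ ^ 2) →
        Summable (fun k : Fin n → ℤ =>
          (1 + Real.sqrt (∑ j, ((k j : ℝ)) ^ 2) ^ (4 * α)) * ‖q k‖ ^ 2) →
        XalphaNorm n α v ≤ C_V → XalphaNorm n α p ≤ C_p → XalphaNorm n α q ≤ C_p →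
        (∀ y : Fin n → ℝ, (fourierSeries n v y).im = 0) →
        ∀ t : ℝ, 0 ≤ t →
          L2NormPeriodic n (fun y =>
              Complex.exp (-Complex.I * (t : ℂ) *
                  (fourierSeries n v y +
                    (θ : ℂ) * ((‖fourierSeries n p y‖ : ℝ) : ℂ) ^ 2)) *
                fourierSeries n p y -
              Complex.exp (-Complex.I * (t : ℂ) *
                  (fourierSeries n v y +
                    (θ : ℂ) * ((‖fourierSeries n q y‖ : ℝ) : ℂ) ^ 2)) *
                fourierSeries n q y)
            ≤ Real.exp (C * (C_V + |θ| * C_p ^ 2) * t) *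
                L2NormPeriodic n (fun y => fourierSeries n p y - fourierSeries n q y) := by
  set S : ℝ := Sw n α with hSdef
  have hS1 : (1:ℝ) ≤ S := one_le_tsum_weight n hn hα
  refine ⟨2 * S, by linarith, ?_⟩
  intro v p q hv hp hq hvB hpB hqB hreal t ht
  have hvn : Summable (fun k => ‖v k‖) := summable_norm_coeff n hn hα v hv
  have hpn : Summable (fun k => ‖p k‖) := summable_norm_coeff n hn hα p hp
  have hqn : Summable (fun k => ‖q k‖) := summable_norm_coeff n hn hα q hq
  have hφc : Continuous (fourierSeries n p) := continuous_fourierSeries n p hpn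
  have hψc : Continuous (fourierSeries n q) := continuous_fourierSeries n q hqn
  have hVc : Continuous (fourierSeries n v) := continuous_fourierSeries n v hvn
  set M : ℝ := Real.sqrt S * C_p with hM
  have hM0 : 0 ≤ M := mul_nonneg (Real.sqrt_nonneg _) hCp
  have hM2 : M ^ 2 = S * C_p ^ 2 := by
    rw [hM, mul_pow, Real.sq_sqrt (by linarith)]
  have hφb : ∀ y, ‖fourierSeries n p y‖ ≤ M :=
    fun y => (norm_fourierSeries_le n p hpn y).trans
      (tsum_norm_coeff_le n hn hα p hp hCp hpB)
  have hψb : ∀ y, ‖fourierSeries n q y‖ ≤ M :=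
    fun y => (norm_fourierSeries_le n q hqn y).trans
      (tsum_norm_coeff_le n hn hα q hq hCp hqB)
  set K : ℝ := Real.exp (2 * S * (C_V + |θ| * C_p ^ 2) * t) with hK
  have hKpos : 0 ≤ K := (Real.exp_pos _).le
  have hfactor : 1 + t * |θ| * (2 * (S * C_p ^ 2)) ≤ K := by
    have h0 : 1 + t * |θ| * (2 * (S * C_p ^ 2)) ≤
        Real.exp (t * |θ| * (2 * (S * C_p ^ 2))) := by
      linarith [Real.add_one_le_exp (t * |θ| * (2 * (S * C_p ^ 2)))]
    have h1 : t * |θ| * (2 * (S * C_p ^ 2)) ≤ 2 * S * (C_V + |θ| * C_p ^ 2) * t := by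
      nlinarith [mul_nonneg (mul_nonneg (by linarith : (0:ℝ) ≤ 2 * S) hCV) ht]
    exact h0.trans (Real.exp_le_exp.mpr h1)
  -- pointwise estimate
  have hpt : ∀ y : Fin n → ℝ,
      ‖Complex.exp (-Complex.I * (t : ℂ) *
          (fourierSeries n v y + (θ : ℂ) * ((‖fourierSeries n p y‖ : ℝ) : ℂ) ^ 2)) *
        fourierSeries n p y -
        Complex.exp (-Complex.I * (t : ℂ) *
          (fourierSeries n v y + (θ : ℂ) * ((‖fourierSeries n q y‖ : ℝ) : ℂ) ^ 2)) *
        fourierSeries n q y‖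
      ≤ K * ‖fourierSeries n p y - fourierSeries n q y‖ := by
    intro y
    have hcast : (((fourierSeries n v y).re : ℝ) : ℂ) = fourierSeries n v y :=
      Complex.ext (Complex.ofReal_re _) (by rw [Complex.ofReal_im, hreal y])
    rw [← hcast]
    refine le_trans (pointwise_est t θ ht (fourierSeries n v y).re
      (fourierSeries n p y) (fourierSeries n q y)) ?_
    have hab : (‖fourierSeries n p y‖ + ‖fourierSeries n q y‖) * ‖fourierSeries n p y‖
        ≤ 2 * (S * C_p ^ 2) := by
      have h1 := hφb y
      have h2 := hψb y
      have h3 := norm_nonneg (fourierSeries n p y)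
      have h4 := norm_nonneg (fourierSeries n q y)
      nlinarith [hM2]
    have hmult : 1 + t * |θ| * ((‖fourierSeries n p y‖ + ‖fourierSeries n q y‖) *
        ‖fourierSeries n p y‖) ≤ K := by
      have h5 : 0 ≤ t * |θ| := mul_nonneg ht (abs_nonneg θ)
      nlinarith [hfactor]
    exact mul_le_mul_of_nonneg_right hmult (norm_nonneg _)
  -- continuity of the big function
  have hcont : Continuous (fun y : Fin n → ℝ =>
      Complex.exp (-Complex.I * (t : ℂ) *
          (fourierSeries n v y + (θ : ℂ) * ((‖fourierSeries n p y‖ : ℝ) : ℂ) ^ 2)) *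
        fourierSeries n p y -
      Complex.exp (-Complex.I * (t : ℂ) *
          (fourierSeries n v y + (θ : ℂ) * ((‖fourierSeries n q y‖ : ℝ) : ℂ) ^ 2)) *
        fourierSeries n q y) := by
    have haux : ∀ (F : (Fin n → ℝ) → ℂ), Continuous F → Continuous (fun y =>
        Complex.exp (-Complex.I * (t : ℂ) *
          (fourierSeries n v y + (θ : ℂ) * ((‖F y‖ : ℝ) : ℂ) ^ 2)) * F y) := by
      intro F hF
      refine Continuous.mul ?_ hF
      refine Complex.continuous_exp.comp ?_
      exact continuous_const.mul (hVc.add (continuous_const.mul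
        ((Complex.continuous_ofReal.comp hF.norm).pow 2)))
    exact (haux _ hφc).sub (haux _ hψc)
  exact L2_mono n _ _ hcont (hφc.sub hψc) hKpos hpt
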